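/- Let p ≥ m ≥ 1 be integers, let A be an m×p matrix with integer entries of rank m, and let b ∈ ℝ^m. If U is a random vector uniformly distributed on [0,1]^p, then the random vector Ψ_{A,b}(U) ∈ [0,1]^m whose i-th component is frac((AU + b)_i), i = 1,…,m, is uniformly distributed on [0,1]^m. -/

import Mathlib

open MeasureTheory Set

attribute [local instance] ZeroLEOneClass.factZeroLtOne

noncomputable section Stmt0Aux

local notation "𝕋" => AddCircle (1 : ℝ)

instance : IsProbabilityMeasure (volume : Measure 𝕋) :=
  ⟨by simp [AddCircle.measure_univ]⟩

lemma restrict_pi_eq (n : ℕ) {I : Set ℝ} (hI : MeasurableSet I) :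
    (volume : Measure (Fin n → ℝ)).restrict (univ.pi fun _ => I)
      = Measure.pi (fun _ : Fin n => volume.restrict I) :=
  (Measure.pi_eq fun s hs => by
    rw [Measure.restrict_apply (MeasurableSet.univ_pi hs), ← Set.pi_inter_distrib,
      volume_pi_pi]
    exact Finset.prod_congr rfl fun i _ => (Measure.restrict_apply (hs i)).symm).symm

lemma pi_ae_eq (n : ℕ) {I J : Set ℝ} (hJI : J ⊆ I) (hI : MeasurableSet I)
    (hJ : MeasurableSet J) (h1 : volume I = 1) (h2 : volume J = 1) :
    (univ.pi fun _ : Fin n => I) =ᵐ[(volume : Measure (Fin n → ℝ))]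
      (univ.pi fun _ : Fin n => J) := by
  have hsub : (univ.pi fun _ : Fin n => J) ⊆ univ.pi fun _ : Fin n => I :=
    Set.pi_mono fun i _ => hJI
  rw [MeasureTheory.ae_eq_set]
  constructor
  · have hd : volume ((univ.pi fun _ : Fin n => I) \ (univ.pi fun _ : Fin n => J)) =
        volume (univ.pi fun _ : Fin n => I) - volume (univ.pi fun _ : Fin n => J) :=
      measure_diff hsub (MeasurableSet.univ_pi fun _ => hJ).nullMeasurableSet
        (by rw [volume_pi_pi]; simp [h2])
    rw [hd, volume_pi_pi, volume_pi_pi]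
    simp [h1, h2]
  · simp [Set.diff_eq_empty.2 hsub]


def mkHom : ℝ →+ 𝕋 := QuotientAddGroup.mk' _

variable {m p : ℕ}

def AHom (A : Matrix (Fin m) (Fin p) ℤ) : (Fin p → 𝕋) →+ (Fin m → 𝕋) where
  toFun x i := ∑ j, A i j • x j
  map_zero' := by funext i; simp
  map_add' x y := by funext i; simp [smul_add, Finset.sum_add_distrib]

lemma AHom_continuous (A : Matrix (Fin m) (Fin p) ℤ) : Continuous (AHom A) := by
  refine continuous_pi fun i => ?_
  show Continuous fun x : Fin p → 𝕋 => ∑ j, A i j • x j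
  exact continuous_finset_sum _ fun j _ =>
    (continuous_zsmul (A i j)).comp (continuous_apply j)

lemma AHom_comm (A : Matrix (Fin m) (Fin p) ℤ) (u : Fin p → ℝ) :
    AHom A (fun j => ((u j : ℝ) : 𝕋)) =
      fun i => (((A.map (Int.cast : ℤ → ℝ)).mulVec u i : ℝ) : 𝕋) := by
  funext i
  show ∑ j, A i j • ((u j : ℝ) : 𝕋) = mkHom ((A.map (Int.cast : ℤ → ℝ)).mulVec u i)
  have : (A.map (Int.cast : ℤ → ℝ)).mulVec u i = ∑ j, A i j • u j := by
    simp [Matrix.mulVec, dotProduct, Matrix.map_apply, zsmul_eq_mul]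
  rw [this, map_sum]
  exact Finset.sum_congr rfl fun j _ => (map_zsmul mkHom _ _).symm

lemma AHom_surjective (A : Matrix (Fin m) (Fin p) ℤ)
    (hrank : (A.map (Int.cast : ℤ → ℝ)).rank = m) :
    Function.Surjective (AHom A) := by
  have hr : LinearMap.range (A.map (Int.cast : ℤ → ℝ)).mulVecLin = ⊤ := by
    apply Submodule.eq_top_of_finrank_eq
    rw [← Matrix.rank, hrank]
    simp [Module.finrank_pi]
  have hsurj : Function.Surjective ((A.map (Int.cast : ℤ → ℝ)).mulVecLin) :=
    LinearMap.range_eq_top.mp hr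
  intro y
  choose r hr' using fun i => QuotientAddGroup.mk_surjective (y i)
  obtain ⟨u, hu⟩ := hsurj r
  refine ⟨fun j => ((u j : ℝ) : 𝕋), ?_⟩
  rw [AHom_comm]
  funext i
  have : (A.map (Int.cast : ℤ → ℝ)).mulVec u i = r i := congrFun hu i
  rw [this, hr' i]


instance (n : ℕ) : IsProbabilityMeasure (volume : Measure (Fin n → 𝕋)) := by
  constructor
  rw [← Set.pi_univ Set.univ, volume_pi_pi]
  simp

instance (n : ℕ) : Measure.IsAddHaarMeasure (volume : Measure (Fin n → 𝕋)) :=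
  Measure.isAddHaarMeasure_of_isCompact_nonempty_interior volume univ isCompact_univ
    (by simp) (by simp) (by simp)

lemma map_AHom (A : Matrix (Fin m) (Fin p) ℤ)
    (hrank : (A.map (Int.cast : ℤ → ℝ)).rank = m) :
    Measure.map (AHom A) volume = volume := by
  have h1 : Measure.IsAddHaarMeasure (Measure.map (AHom A) volume) :=
    Measure.isAddHaarMeasure_map_of_isFiniteMeasure volume (AHom A) (AHom_continuous A)
      (AHom_surjective A hrank)
  have h2 : IsProbabilityMeasure (Measure.map (AHom A) volume) :=
    Measure.isProbabilityMeasure_map (AHom_continuous A).measurable.aemeasurable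
  exact Measure.isAddHaarMeasure_eq_of_isProbabilityMeasure _ _

def rho : 𝕋 → ℝ := fun x => (AddCircle.equivIco 1 0 x : ℝ)

lemma rho_measurable : Measurable rho :=
  measurable_subtype_coe.comp (AddCircle.measurableEquivIco 1 0).measurable

lemma rho_mk (x : ℝ) : rho ((x : ℝ) : 𝕋) = Int.fract x := by
  simp [rho, AddCircle.coe_equivIco_mk_apply]

lemma restrict_Ioc_eq_Ico :
    (volume : Measure ℝ).restrict (Ioc (0:ℝ) 1) = volume.restrict (Ico (0:ℝ) 1) := by
  apply Measure.restrict_congr_set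
  rw [MeasureTheory.ae_eq_set]
  constructor
  · refine measure_mono_null (fun x hx => ?_) (Real.volume_singleton (a := 1))
    obtain ⟨⟨h1, h2⟩, h3⟩ := hx
    simp only [mem_Ico, not_and, not_lt] at h3
    have h4 := h3 h1.le
    have : x = (1:ℝ) := le_antisymm h2 h4
    simp [this]
  · refine measure_mono_null (fun x hx => ?_) (Real.volume_singleton (a := 0))
    obtain ⟨⟨h1, h2⟩, h3⟩ := hx
    simp only [mem_Ioc, not_and, not_le] at h3
    have h4 : ¬ (0:ℝ) < x := fun h => absurd (h3 h) (not_lt.2 h2.le)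
    have : x = (0:ℝ) := le_antisymm (not_lt.1 h4) h1
    simp [this]

lemma map_rho : Measure.map rho volume = volume.restrict (Ico (0:ℝ) 1) := by
  have h0 := (AddCircle.measurePreserving_mk 1 0).map_eq
  rw [zero_add] at h0
  calc Measure.map rho volume
      = Measure.map rho (Measure.map ((↑) : ℝ → 𝕋) (volume.restrict (Ioc (0:ℝ) 1))) := by
        rw [h0]
    _ = Measure.map (rho ∘ ((↑) : ℝ → 𝕋)) (volume.restrict (Ioc (0:ℝ) 1)) :=
        Measure.map_map rho_measurable AddCircle.measurable_mk'
    _ = Measure.map Int.fract (volume.restrict (Ioc (0:ℝ) 1)) := by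
        congr 1; funext x; exact rho_mk x
    _ = Measure.map Int.fract (volume.restrict (Ico (0:ℝ) 1)) := by rw [restrict_Ioc_eq_Ico]
    _ = Measure.map id (volume.restrict (Ico (0:ℝ) 1)) := by
        apply Measure.map_congr
        filter_upwards [ae_restrict_mem measurableSet_Ico] with x hx
        exact Int.fract_eq_self.2 ⟨hx.1, hx.2⟩
    _ = volume.restrict (Ico (0:ℝ) 1) := Measure.map_id


lemma front_map (pp : ℕ) :
    Measure.map (fun u : Fin pp → ℝ => fun j => ((u j : ℝ) : 𝕋))
      (volume.restrict (univ.pi fun _ : Fin pp => Icc (0:ℝ) 1)) = volume := by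
  rw [Measure.restrict_congr_set (pi_ae_eq pp Ioc_subset_Icc_self measurableSet_Icc
    measurableSet_Ioc (by simp) (by simp)), restrict_pi_eq pp measurableSet_Ioc]
  have MP := measurePreserving_pi (fun _ : Fin pp => volume.restrict (Ioc (0:ℝ) 1))
    (fun _ : Fin pp => (volume : Measure 𝕋))
    (fun _ => by simpa using AddCircle.measurePreserving_mk 1 0)
  rw [MP.map_eq, ← volume_pi]

lemma back_map (mm : ℕ) :
    Measure.map (fun y : Fin mm → 𝕋 => fun i => rho (y i)) volume
      = volume.restrict (univ.pi fun _ : Fin mm => Icc (0:ℝ) 1) := by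
  have MP := measurePreserving_pi (fun _ : Fin mm => (volume : Measure 𝕋))
    (fun _ : Fin mm => volume.restrict (Ico (0:ℝ) 1)) (fun _ => ⟨rho_measurable, map_rho⟩)
  rw [volume_pi, MP.map_eq, ← restrict_pi_eq mm measurableSet_Ico,
    Measure.restrict_congr_set (pi_ae_eq mm Ico_subset_Icc_self measurableSet_Icc
      measurableSet_Ico (by simp) (by simp)).symm]

lemma mid_map (A : Matrix (Fin m) (Fin p) ℤ)
    (hrank : (A.map (Int.cast : ℤ → ℝ)).rank = m) (c : Fin m → 𝕋) :
    Measure.map (fun x : Fin p → 𝕋 => c + AHom A x) volume = volume := by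
  rw [show (fun x : Fin p → 𝕋 => c + AHom A x) = (fun y : Fin m → 𝕋 => c + y) ∘ (AHom A)
      from rfl,
    ← Measure.map_map (measurable_const_add c) (AHom_continuous A).measurable,
    map_AHom A hrank, MeasureTheory.map_add_left_eq_self volume c]

end Stmt0Aux


theorem stmt_0 (m p : ℕ) (hm : 1 ≤ m) (hmp : m ≤ p)
    (A : Matrix (Fin m) (Fin p) ℤ) (b : Fin m → ℝ)
    (hrank : (A.map (Int.cast : ℤ → ℝ)).rank = m) :
    Measure.map
      (fun u : Fin p → ℝ => fun i : Fin m =>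
        Int.fract ((A.map (Int.cast : ℤ → ℝ)).mulVec u i + b i))
      (volume.restrict (Set.univ.pi fun _ : Fin p => Set.Icc (0:ℝ) 1))
    = volume.restrict (Set.univ.pi fun _ : Fin m => Set.Icc (0:ℝ) 1) := by
  classical
  set c : Fin m → AddCircle (1:ℝ) := fun i => ((b i : ℝ) : AddCircle (1:ℝ)) with hc
  have h1meas : Measurable (fun u : Fin p → ℝ => fun j => ((u j : ℝ) : AddCircle (1:ℝ))) :=
    measurable_pi_iff.mpr fun j => AddCircle.measurable_mk'.comp (measurable_pi_apply j)
  have h2meas : Measurable (fun x : Fin p → AddCircle (1:ℝ) => c + AHom A x) :=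
    (continuous_const.add (AHom_continuous A)).measurable
  have h3meas : Measurable (fun y : Fin m → AddCircle (1:ℝ) => fun i => rho (y i)) :=
    measurable_pi_iff.mpr fun i => rho_measurable.comp (measurable_pi_apply i)
  have hfun : (fun u : Fin p → ℝ => fun i : Fin m =>
      Int.fract ((A.map (Int.cast : ℤ → ℝ)).mulVec u i + b i))
      = (fun y : Fin m → AddCircle (1:ℝ) => fun i => rho (y i))
        ∘ ((fun x : Fin p → AddCircle (1:ℝ) => c + AHom A x)
          ∘ (fun u : Fin p → ℝ => fun j => ((u j : ℝ) : AddCircle (1:ℝ)))) := by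
    funext u
    funext i
    show Int.fract ((A.map (Int.cast : ℤ → ℝ)).mulVec u i + b i)
      = rho (c i + AHom A (fun j => ((u j : ℝ) : AddCircle (1:ℝ))) i)
    rw [congrFun (AHom_comm A u) i]
    have hadd : c i + (((A.map (Int.cast : ℤ → ℝ)).mulVec u i : ℝ) : AddCircle (1:ℝ))
        = (((b i + (A.map (Int.cast : ℤ → ℝ)).mulVec u i : ℝ)) : AddCircle (1:ℝ)) :=
      (map_add mkHom _ _).symm
    rw [hadd, rho_mk, add_comm]
  rw [hfun, ← Measure.map_map h3meas (h2meas.comp h1meas),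
      ← Measure.map_map h2meas h1meas, front_map, mid_map A hrank, back_map]
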